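/- A universal Osborn loop is a 3-power-associative property loop (xx·x = x·xx for all x) if and only if it satisfies both xx·xx = (x·xx)·x and xx·xx = (xx·x)·x for all x. -/
import Mathlib


/-- A loop: a set with multiplication, left division `ld`, right division `rd`
and a two-sided identity `e`. -/
structure LoopStr (Q : Type*) where
  mul : Q → Q → Q
  ld : Q → Q → Q
  rd : Q → Q → Q
  e : Q
  mul_ld : ∀ x y, mul x (ld x y) = y
  rd_mul : ∀ x y, mul (rd y x) x = y
  ld_mul : ∀ x y, ld x (mul x y) = y
  mul_rd : ∀ x y, rd (mul y x) x = y
  one_mul : ∀ x, mul e x = x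
  mul_one : ∀ x, mul x e = x

namespace LoopStr

variable {Q : Type*} (L : LoopStr Q)

/-- The left inverse `x^λ` of `x`, i.e. the unique element with `x^λ · x = e`. -/
def lam (x : Q) : Q := L.rd L.e x

/-- The right inverse `x^ρ` of `x`, i.e. the unique element with `x · x^ρ = e`. -/
def rho (x : Q) : Q := L.ld x L.e

/-- A binary operation `op` with identity `e'` is Osborn if, whenever `xl` is a
left inverse of `x` w.r.t. `op`, the Osborn identity
`x(yz·x) = (x(y·x^λ·x))·(zx)` holds. -/
def IsOsbornOp (op : Q → Q → Q) (e' : Q) : Prop :=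
  ∀ x y z xl, op xl x = e' →
    op x (op (op y z) x) = op (op x (op (op y xl) x)) (op z x)

/-- The `u,v`-principal isotope: `x ∗ y = (x/v)·(u\y)`; its identity is `u·v`. -/
def isotope (u v : Q) : Q → Q → Q := fun x y => L.mul (L.rd x v) (L.ld u y)

/-- `Q` is a universal Osborn loop: every `u,v`-principal isotope is Osborn. -/
def Universal : Prop := ∀ u v, IsOsbornOp (L.isotope u v) (L.mul u v)

/-- `Q` is a left universal Osborn loop: every left principal isotope
`x ∗ y = (x/v)·y` (identity `v`) is Osborn. -/
def LeftUniversal : Prop := ∀ v, IsOsbornOp (fun x y => L.mul (L.rd x v) y) v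

/-- `Q` is a right universal Osborn loop: every right principal isotope
`x ∗ y = x·(u\y)` (identity `u`) is Osborn. -/
def RightUniversal : Prop := ∀ u, IsOsbornOp (fun x y => L.mul x (L.ld u y)) u

end LoopStr

open LoopStr

private theorem cg2 {Q : Type*} (f : Q → Q → Q) {a a' b b' : Q}
    (h1 : a = a') (h2 : b = b') : f a b = f a' b' := h1 ▸ h2 ▸ rfl

private theorem osb {Q : Type*} (L : LoopStr Q) (h : L.Universal) (u v X y z : Q) :
    (L.mul (L.rd X v) (L.ld u (L.mul (L.rd (L.mul (L.rd y v) (L.ld u z)) v) (L.ld u X)))) =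
    (L.mul (L.rd (L.mul (L.rd X v) (L.ld u (L.mul (L.rd (L.mul (L.rd y v) (L.ld u (L.mul (L.rd (L.mul u v) (L.ld u X)) v))) v) (L.ld u X)))) v) (L.ld u (L.mul (L.rd z v) (L.ld u X)))) := by
  have hx : L.isotope u v (L.mul (L.rd (L.mul u v) (L.ld u X)) v) X = L.mul u v := by
    show L.mul (L.rd (L.mul (L.rd (L.mul u v) (L.ld u X)) v) v) (L.ld u X) = L.mul u v
    rw [L.mul_rd, L.rd_mul]
  exact h u v X y z _ hx

theorem universal_osborn_three_pa_iff {Q : Type*} (L : LoopStr Q)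
    (h : L.Universal) :
    (∀ x, L.mul (L.mul x x) x = L.mul x (L.mul x x)) ↔
      ((∀ x, L.mul (L.mul x x) (L.mul x x) = L.mul (L.mul x (L.mul x x)) x) ∧
        (∀ x, L.mul (L.mul x x) (L.mul x x) = L.mul (L.mul (L.mul x x) x) x)) := by
  constructor
  · intro h3
    have key : ∀ x, L.mul (L.mul x x) (L.mul x x) = L.mul (L.mul x (L.mul x x)) x := by
      intro x
      have p1 := (L.mul_one (L.rd (L.mul (L.rd x L.e) (L.ld L.e (L.mul (L.rd (L.mul (L.rd x L.e) (L.ld L.e (L.mul (L.rd (L.mul L.e L.e) (L.ld L.e x)) L.e))) L.e) (L.ld L.e x)))) L.e))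
      have p2 := (p1).symm
      have p3 := (L.rd_mul L.e (L.mul (L.rd x L.e) (L.ld L.e (L.mul (L.rd (L.mul (L.rd x L.e) (L.ld L.e (L.mul (L.rd (L.mul L.e L.e) (L.ld L.e x)) L.e))) L.e) (L.ld L.e x)))))
      have p4 := (L.mul_one (L.rd x L.e))
      have p5 := (p4).symm
      have p6 := (L.rd_mul L.e x)
      have p7 := ((p5).trans p6)
      have p8 := (L.mul_one (L.rd (L.mul (L.rd x L.e) (L.ld L.e (L.mul (L.rd (L.mul L.e L.e) (L.ld L.e x)) L.e))) L.e))
      have p9 := (p8).symm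
      have p10 := (L.rd_mul L.e (L.mul (L.rd x L.e) (L.ld L.e (L.mul (L.rd (L.mul L.e L.e) (L.ld L.e x)) L.e))))
      have p11 := (p10).symm
      have p12 := (p11).symm
      have p13 := (L.rd_mul L.e x)
      have p14 := (p13).symm
      have p15 := (L.mul_one (L.rd x L.e))
      have p16 := (p15).symm
      have p17 := (p16).symm
      have p18 := ((p14).trans p17)
      have p19 := (L.one_mul (L.ld x (L.mul (L.rd (L.mul x L.e) (L.ld x (L.mul x x))) L.e)))
      have p20 := (p19).symm
      have p21 := (L.one_mul L.e)
      have p22 := (p21).symm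
      have p23 := (p22)
      have p24 := (Eq.refl L.e)
      have p25 := (cg2 L.rd p23 p24)
      have p26 := (L.mul_rd L.e L.e)
      have p27 := ((p25).trans p26)
      have p28 := (Eq.refl (L.ld x (L.mul (L.rd (L.mul x L.e) (L.ld x (L.mul x x))) L.e)))
      have p29 := (cg2 L.mul p27 p28)
      have p30 := (p29).symm
      have p31 := (L.mul_ld L.e x)
      have p32 := (p31).symm
      have p33 := (Eq.refl (L.ld L.e x))
      have p34 := (cg2 L.mul p27 p33)
      have p35 := (p34).symm
      have p36 := ((p32).trans p35)
      have p37 := (L.mul_ld L.e x)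
      have p38 := (p37).symm
      have p39 := (L.one_mul (L.ld L.e x))
      have p40 := ((p38).trans p39)
      have p41 := (cg2 L.rd p36 p40)
      have p42 := (L.mul_rd (L.ld L.e x) (L.rd L.e L.e))
      have p43 := ((p41).trans p42)
      have p44 := (Eq.refl x)
      have p45 := (L.mul_rd L.e L.e)
      have p46 := (p45).symm
      have p47 := (Eq.refl L.e)
      have p48 := (cg2 L.rd p23 p47)
      have p49 := (p48).symm
      have p50 := (L.mul_rd (L.ld L.e x) (L.rd L.e L.e))
      have p51 := (p50).symm
      have p52 := (cg2 L.rd p36 p40)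
      have p53 := (p52).symm
      have p54 := (L.mul_one x)
      have p55 := (p54)
      have p56 := (L.ld_mul x x)
      have p57 := (p56)
      have p58 := (cg2 L.rd p55 p57)
      have p59 := (p58).symm
      have p60 := (((((p46).trans p49).trans p51).trans p53).trans p59)
      have p61 := (Eq.refl L.e)
      have p62 := (cg2 L.mul p60 p61)
      have p63 := (p62).symm
      have p64 := (L.one_mul L.e)
      have p65 := (p64).symm
      have p66 := (p65).symm
      have p67 := (L.ld_mul x L.e)
      have p68 := (p67).symm
      have p69 := (Eq.refl x)
      have p70 := (L.mul_one x)
      have p71 := (p70).symm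
      have p72 := (p71)
      have p73 := (cg2 L.ld p69 p72)
      have p74 := (p73).symm
      have p75 := (L.one_mul (L.ld x x))
      have p76 := (p75).symm
      have p77 := (Eq.refl (L.ld x x))
      have p78 := (cg2 L.mul p27 p77)
      have p79 := (p78).symm
      have p80 := (L.ld_mul x x)
      have p81 := (L.mul_ld L.e x)
      have p82 := (p81).symm
      have p83 := (L.one_mul (L.ld L.e x))
      have p84 := (((p80).trans p82).trans p83)
      have p85 := (cg2 L.mul p43 p84)
      have p86 := (Eq.refl (L.ld L.e x))
      have p87 := (cg2 L.mul p27 p86)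
      have p88 := (L.mul_ld L.e x)
      have p89 := (p88).symm
      have p90 := (p89).symm
      have p91 := (((p85).trans p87).trans p90)
      have p92 := (Eq.refl x)
      have p93 := (cg2 L.rd p91 p92)
      have p94 := (cg2 L.rd p36 p40)
      have p95 := (L.mul_rd (L.ld L.e x) (L.rd L.e L.e))
      have p96 := (((p93).trans p94).trans p95)
      have p97 := (Eq.refl (L.ld x x))
      have p98 := (cg2 L.mul p96 p97)
      have p99 := (p98).symm
      have p100 := (((((((p63).trans p66).trans p68).trans p74).trans p76).trans p79).trans p99)
      have p101 := (cg2 L.ld p44 p100)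
      have p102 := (p101).symm
      have p103 := (p102)
      have p104 := (cg2 L.mul p43 p103)
      have p105 := (p104).symm
      have p106 := (osb L h x x x x (L.mul x x))
      have p107 := (p106).symm
      have p108 := (p107).symm
      have p109 := (Eq.refl x)
      have p110 := (cg2 L.rd p36 p40)
      have p111 := (L.mul_rd (L.ld L.e x) (L.rd L.e L.e))
      have p112 := (Eq.refl L.e)
      have p113 := (cg2 L.rd p23 p112)
      have p114 := (L.mul_rd L.e L.e)
      have p115 := ((((p110).trans p111).trans p113).trans p114)
      have p116 := (Eq.refl x)
      have p117 := (L.mul_one (L.mul x x))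
      have p118 := (p117).symm
      have p119 := (L.rd_mul L.e (L.mul x x))
      have p120 := (p119).symm
      have p121 := (L.mul_one (L.rd (L.mul x x) L.e))
      have p122 := (p121).symm
      have p123 := (p122).symm
      have p124 := ((p120).trans p123)
      have p125 := (L.ld_mul x L.e)
      have p126 := (p125).symm
      have p127 := (Eq.refl x)
      have p128 := (cg2 L.ld p127 p72)
      have p129 := (p128).symm
      have p130 := (Eq.refl x)
      have p131 := (L.mul_one (L.rd (L.mul (L.rd L.e L.e) (L.ld x x)) L.e))
      have p132 := (p131).symm
      have p133 := (L.rd_mul L.e (L.mul (L.rd L.e L.e) (L.ld x x)))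
      have p134 := (Eq.refl (L.ld x x))
      have p135 := (cg2 L.mul p27 p134)
      have p136 := (L.one_mul (L.ld x x))
      have p137 := (Eq.refl x)
      have p138 := (cg2 L.ld p137 p72)
      have p139 := (L.ld_mul x L.e)
      have p140 := ((((((p132).trans p133).trans p135).trans p136).trans p138).trans p139)
      have p141 := (Eq.refl (L.ld x (L.mul x x)))
      have p142 := (cg2 L.mul p140 p141)
      have p143 := (L.mul_rd L.e L.e)
      have p144 := (p143).symm
      have p145 := (Eq.refl L.e)
      have p146 := (cg2 L.rd p23 p145)
      have p147 := (p146).symm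
      have p148 := ((p144).trans p147)
      have p149 := (cg2 L.mul p148 p84)
      have p150 := (Eq.refl (L.ld L.e x))
      have p151 := (cg2 L.mul p27 p150)
      have p152 := (L.mul_ld L.e x)
      have p153 := (p152).symm
      have p154 := (p153).symm
      have p155 := ((((p142).trans p149).trans p151).trans p154)
      have p156 := (cg2 L.ld p130 p155)
      have p157 := (p156).symm
      have p158 := (((p126).trans p129).trans p157)
      have p159 := (cg2 L.mul p124 p158)
      have p160 := ((p118).trans p159)
      have p161 := (Eq.refl x)
      have p162 := (cg2 L.ld p161 p155)
      have p163 := (p162).symm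
      have p164 := (p163)
      have p165 := (cg2 L.rd p160 p164)
      have p166 := (L.mul_rd (L.ld x (L.mul (L.rd (L.mul (L.rd L.e L.e) (L.ld x x)) L.e) (L.ld x (L.mul x x)))) (L.rd (L.mul x x) L.e))
      have p167 := (L.mul_one (L.rd (L.mul x x) L.e))
      have p168 := (p167).symm
      have p169 := (L.rd_mul L.e (L.mul x x))
      have p170 := ((((p165).trans p166).trans p168).trans p169)
      have p171 := (Eq.refl x)
      have p172 := (cg2 L.mul p170 p171)
      have p173 := (h3 x)
      have p174 := (p173).symm
      have p175 := (p174).symm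
      have p176 := ((p172).trans p175)
      have p177 := (cg2 L.ld p116 p176)
      have p178 := (L.ld_mul x (L.mul x x))
      have p179 := ((p177).trans p178)
      have p180 := (cg2 L.mul p115 p179)
      have p181 := (L.one_mul (L.mul x x))
      have p182 := ((p180).trans p181)
      have p183 := (Eq.refl x)
      have p184 := (cg2 L.rd p182 p183)
      have p185 := (p184)
      have p186 := (Eq.refl (L.ld x x))
      have p187 := (cg2 L.mul p185 p186)
      have p188 := (L.mul_rd x x)
      have p189 := (p188)
      have p190 := (Eq.refl (L.ld x x))
      have p191 := (cg2 L.mul p189 p190)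
      have p192 := (L.mul_ld x x)
      have p193 := (((p187).trans p191).trans p192)
      have p194 := (cg2 L.ld p109 p193)
      have p195 := (p194)
      have p196 := (cg2 L.mul p43 p195)
      have p197 := (Eq.refl (L.ld x x))
      have p198 := (cg2 L.mul p27 p197)
      have p199 := (L.one_mul (L.ld x x))
      have p200 := (Eq.refl x)
      have p201 := (cg2 L.ld p200 p72)
      have p202 := (L.ld_mul x L.e)
      have p203 := (L.one_mul L.e)
      have p204 := (p203).symm
      have p205 := ((((((p196).trans p198).trans p199).trans p201).trans p202).trans p204)
      have p206 := (cg2 L.rd p205 p40)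
      have p207 := (p206).symm
      have p208 := (p207)
      have p209 := (L.ld_mul x L.e)
      have p210 := (p209).symm
      have p211 := (Eq.refl x)
      have p212 := (cg2 L.ld p211 p72)
      have p213 := (p212).symm
      have p214 := (Eq.refl x)
      have p215 := (Eq.refl (L.ld x x))
      have p216 := (cg2 L.mul p189 p215)
      have p217 := (L.mul_ld x x)
      have p218 := ((p216).trans p217)
      have p219 := (cg2 L.ld p214 p218)
      have p220 := (p219).symm
      have p221 := (((p210).trans p213).trans p220)
      have p222 := (cg2 L.mul p208 p221)
      have p223 := (p222).symm
      have p224 := (L.mul_ld L.e (L.mul (L.rd (L.mul L.e L.e) (L.ld L.e x)) L.e))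
      have p225 := (p224).symm
      have p226 := (L.one_mul (L.ld L.e (L.mul (L.rd (L.mul L.e L.e) (L.ld L.e x)) L.e)))
      have p227 := (p226).symm
      have p228 := (p227).symm
      have p229 := (((((((p20).trans p30).trans p105).trans p108).trans p223).trans p225).trans p228)
      have p230 := (cg2 L.mul p18 p229)
      have p231 := (p230).symm
      have p232 := (L.mul_ld x (L.mul (L.rd (L.mul x L.e) (L.ld x (L.mul x x))) L.e))
      have p233 := (p232).symm
      have p234 := (p233).symm
      have p235 := (Eq.refl L.e)
      have p236 := (cg2 L.mul p60 p235)
      have p237 := (p236).symm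
      have p238 := (L.one_mul L.e)
      have p239 := (p238).symm
      have p240 := (p239).symm
      have p241 := ((((((p9).trans p12).trans p231).trans p234).trans p237).trans p240)
      have p242 := (Eq.refl (L.mul (L.rd (L.mul (L.rd x L.e) (L.ld L.e (L.mul (L.rd (L.mul L.e L.e) (L.ld L.e x)) L.e))) L.e) (L.ld L.e x)))
      have p243 := (cg2 L.ld p241 p242)
      have p244 := (p243).symm
      have p245 := (L.ld_mul (L.rd (L.mul (L.rd x L.e) (L.ld L.e (L.mul (L.rd (L.mul L.e L.e) (L.ld L.e x)) L.e))) L.e) (L.ld L.e x))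
      have p246 := (p245).symm
      have p247 := (p246).symm
      have p248 := (L.one_mul (L.ld L.e x))
      have p249 := (p248).symm
      have p250 := (L.mul_ld L.e x)
      have p251 := (p250).symm
      have p252 := (p251).symm
      have p253 := ((((p244).trans p247).trans p249).trans p252)
      have p254 := (cg2 L.mul p7 p253)
      have p255 := (((p2).trans p3).trans p254)
      have p256 := (L.one_mul (L.ld L.e (L.mul (L.rd x L.e) (L.ld L.e x))))
      have p257 := (p256).symm
      have p258 := (L.mul_ld L.e (L.mul (L.rd x L.e) (L.ld L.e x)))
      have p259 := (L.one_mul (L.ld L.e x))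
      have p260 := (p259).symm
      have p261 := (L.mul_ld L.e x)
      have p262 := (p261).symm
      have p263 := (p262).symm
      have p264 := ((p260).trans p263)
      have p265 := (cg2 L.mul p7 p264)
      have p266 := (((p257).trans p258).trans p265)
      have p267 := (cg2 L.mul p255 p266)
      have p268 := (p267).symm
      have p269 := (osb L h L.e L.e x x x)
      have p270 := (p269).symm
      have p271 := (Eq.refl (L.rd x L.e))
      have p272 := (Eq.refl L.e)
      have p273 := (L.rd_mul L.e (L.mul x x))
      have p274 := (p273).symm
      have p275 := (L.mul_one (L.rd (L.mul x x) L.e))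
      have p276 := (p275).symm
      have p277 := (p276).symm
      have p278 := (L.mul_one (L.rd (L.mul x x) L.e))
      have p279 := (p278).symm
      have p280 := (L.rd_mul L.e (L.mul x x))
      have p281 := ((p279).trans p280)
      have p282 := (L.one_mul (L.ld L.e L.e))
      have p283 := (p282).symm
      have p284 := (L.mul_ld L.e L.e)
      have p285 := ((p283).trans p284)
      have p286 := (cg2 L.mul p281 p285)
      have p287 := (L.mul_one (L.mul x x))
      have p288 := (p287).symm
      have p289 := (p288).symm
      have p290 := ((p286).trans p289)
      have p291 := (Eq.refl L.e)
      have p292 := (cg2 L.rd p290 p291)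
      have p293 := (p292).symm
      have p294 := (((p274).trans p277).trans p293)
      have p295 := (cg2 L.mul p294 p40)
      have p296 := (p295).symm
      have p297 := (cg2 L.mul p7 p264)
      have p298 := (p297)
      have p299 := (Eq.refl L.e)
      have p300 := (cg2 L.rd p298 p299)
      have p301 := (L.mul_one (L.rd (L.mul x x) L.e))
      have p302 := (p301).symm
      have p303 := (L.rd_mul L.e (L.mul x x))
      have p304 := (((p300).trans p302).trans p303)
      have p305 := (cg2 L.mul p304 p264)
      have p306 := (p305).symm
      have p307 := ((p296).trans p306)
      have p308 := (cg2 L.ld p272 p307)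
      have p309 := (p308)
      have p310 := (cg2 L.mul p271 p309)
      have p311 := (p310).symm
      have p312 := (osb L h L.e L.e x (L.mul x x) L.e)
      have p313 := (p312).symm
      have p314 := (p313).symm
      have p315 := (L.one_mul (L.ld L.e (L.mul (L.rd (L.mul (L.rd (L.mul x x) L.e) (L.ld L.e (L.mul (L.rd (L.mul L.e L.e) (L.ld L.e x)) L.e))) L.e) (L.ld L.e x))))
      have p316 := (p315).symm
      have p317 := (L.mul_ld L.e (L.mul (L.rd (L.mul (L.rd (L.mul x x) L.e) (L.ld L.e (L.mul (L.rd (L.mul L.e L.e) (L.ld L.e x)) L.e))) L.e) (L.ld L.e x)))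
      have p318 := (p317).symm
      have p319 := (p318).symm
      have p320 := (Eq.refl (L.rd (L.mul x x) L.e))
      have p321 := (Eq.refl x)
      have p322 := (cg2 L.mul p43 p103)
      have p323 := (p322).symm
      have p324 := (osb L h x x x x (L.mul x x))
      have p325 := (p324).symm
      have p326 := (p325).symm
      have p327 := (cg2 L.mul p208 p221)
      have p328 := (p327).symm
      have p329 := (((p323).trans p326).trans p328)
      have p330 := (Eq.refl L.e)
      have p331 := (cg2 L.rd p329 p330)
      have p332 := (L.mul_rd L.e (L.rd (L.mul L.e L.e) (L.ld L.e x)))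
      have p333 := ((p331).trans p332)
      have p334 := (cg2 L.mul p333 p84)
      have p335 := (L.rd_mul (L.ld L.e x) (L.mul L.e L.e))
      have p336 := (L.one_mul L.e)
      have p337 := (p336).symm
      have p338 := (p337).symm
      have p339 := (L.ld_mul x L.e)
      have p340 := (p339).symm
      have p341 := (Eq.refl x)
      have p342 := (cg2 L.ld p341 p72)
      have p343 := (p342).symm
      have p344 := (L.one_mul (L.ld x x))
      have p345 := (p344).symm
      have p346 := (Eq.refl (L.ld x x))
      have p347 := (cg2 L.mul p27 p346)
      have p348 := (p347).symm
      have p349 := (Eq.refl (L.ld x x))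
      have p350 := (cg2 L.mul p96 p349)
      have p351 := (p350).symm
      have p352 := ((((((((p334).trans p335).trans p338).trans p340).trans p343).trans p345).trans p348).trans p351)
      have p353 := (cg2 L.ld p321 p352)
      have p354 := (Eq.refl x)
      have p355 := (cg2 L.ld p354 p100)
      have p356 := (p355).symm
      have p357 := (L.one_mul (L.ld x (L.mul (L.rd (L.mul x L.e) (L.ld x (L.mul x x))) L.e)))
      have p358 := (p357).symm
      have p359 := (Eq.refl (L.ld x (L.mul (L.rd (L.mul x L.e) (L.ld x (L.mul x x))) L.e)))
      have p360 := (cg2 L.mul p27 p359)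
      have p361 := (p360).symm
      have p362 := (cg2 L.mul p43 p103)
      have p363 := (p362).symm
      have p364 := (osb L h x x x x (L.mul x x))
      have p365 := (p364).symm
      have p366 := (p365).symm
      have p367 := (cg2 L.mul p208 p221)
      have p368 := (p367).symm
      have p369 := (L.mul_ld L.e (L.mul (L.rd (L.mul L.e L.e) (L.ld L.e x)) L.e))
      have p370 := (p369).symm
      have p371 := (L.one_mul (L.ld L.e (L.mul (L.rd (L.mul L.e L.e) (L.ld L.e x)) L.e)))
      have p372 := (p371).symm
      have p373 := (p372).symm
      have p374 := (((((((((p353).trans p356).trans p358).trans p361).trans p363).trans p366).trans p368).trans p370).trans p373)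
      have p375 := (cg2 L.mul p320 p374)
      have p376 := (p375)
      have p377 := (Eq.refl L.e)
      have p378 := (cg2 L.rd p376 p377)
      have p379 := (p378)
      have p380 := (Eq.refl x)
      have p381 := (cg2 L.mul p7 p57)
      have p382 := (p381)
      have p383 := (cg2 L.ld p380 p382)
      have p384 := (L.ld_mul x x)
      have p385 := (L.mul_ld L.e x)
      have p386 := (p385).symm
      have p387 := (L.one_mul (L.ld L.e x))
      have p388 := ((((p383).trans p384).trans p386).trans p387)
      have p389 := (cg2 L.mul p379 p388)
      have p390 := (p389).symm
      have p391 := (osb L h x L.e (L.mul x x) L.e x)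
      have p392 := (p391).symm
      have p393 := (cg2 L.mul p124 p158)
      have p394 := (p393).symm
      have p395 := (L.mul_one (L.mul x x))
      have p396 := (p395).symm
      have p397 := (p396).symm
      have p398 := ((((((p316).trans p319).trans p390).trans p392).trans p394).trans p397)
      have p399 := (cg2 L.mul p7 p398)
      have p400 := (p399).symm
      have p401 := (L.rd_mul L.e (L.mul (L.rd x L.e) (L.ld L.e (L.mul (L.rd (L.mul (L.rd (L.mul x x) L.e) (L.ld L.e (L.mul (L.rd (L.mul L.e L.e) (L.ld L.e x)) L.e))) L.e) (L.ld L.e x)))))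
      have p402 := (p401).symm
      have p403 := (L.mul_one (L.rd (L.mul (L.rd x L.e) (L.ld L.e (L.mul (L.rd (L.mul (L.rd (L.mul x x) L.e) (L.ld L.e (L.mul (L.rd (L.mul L.e L.e) (L.ld L.e x)) L.e))) L.e) (L.ld L.e x)))) L.e))
      have p404 := (p403).symm
      have p405 := (p404).symm
      have p406 := (((p400).trans p402).trans p405)
      have p407 := (L.mul_ld L.e x)
      have p408 := (p407).symm
      have p409 := (L.one_mul (L.ld L.e x))
      have p410 := (Eq.refl L.e)
      have p411 := (Eq.refl (L.ld L.e x))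
      have p412 := (cg2 L.mul p27 p411)
      have p413 := (L.mul_ld L.e x)
      have p414 := (p413).symm
      have p415 := (p414).symm
      have p416 := ((p412).trans p415)
      have p417 := (cg2 L.ld p410 p416)
      have p418 := (p417).symm
      have p419 := (((p408).trans p409).trans p418)
      have p420 := (cg2 L.mul p406 p419)
      have p421 := (p420).symm
      have p422 := (((((p268).trans p270).trans p311).trans p314).trans p421)
      exact p422
    refine ⟨key, fun x => ?_⟩
    rw [h3 x]
    exact key x
  · rintro ⟨hA, hB⟩ x
    have h2 := congrArg (fun t => L.rd t x) ((hA x).symm.trans (hB x))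
    simp only [L.mul_rd] at h2
    exact h2.symm
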